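/- arXiv:1209.6133 — 3 statements merged into one kernel-verified Lean document; each statement's English description precedes it below -/
import Mathlib

section
/- Let f ≥ 0 be a measurable function on (0,∞)^k, let r > 0, p ≥ 1 and k a positive integer. Then (∫_0^∞ (∫_0^x ⋯ ∫_0^x f(r₁,…,r_k) dr₁⋯dr_k)^p x^{−r−1} dx)^{1/p} ≤ ∫_0^1 ⋯ ∫_0^1 (∫_0^∞ (x^k f(x v₁,…,x v_k))^p x^{−r−1} dx)^{1/p} dv₁⋯dv_k. -/
open MeasureTheory Real Set
open scoped ENNReal NNReal

section Helpers
open Function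
private lemma rpow_iSup_mono {p : ℝ} (hp : 0 < p) (a : ℕ → ℝ≥0∞) (ha : Monotone a) :
    (⨆ n, a n) ^ p = ⨆ n, a n ^ p := by
  have h1 : Filter.Tendsto a Filter.atTop (nhds (⨆ n, a n)) := tendsto_atTop_iSup ha
  have h2 : Filter.Tendsto (fun n => a n ^ p) Filter.atTop (nhds ((⨆ n, a n) ^ p)) :=
    ((ENNReal.continuous_rpow_const.tendsto _).comp h1)
  exact tendsto_nhds_unique h2
    (tendsto_atTop_iSup (fun m n h => ENNReal.rpow_le_rpow (ha h) hp.le))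

private theorem minkowski_lintegral {α β : Type*} [MeasurableSpace α] [MeasurableSpace β]
    (μ : Measure α) (ν : Measure β) [SigmaFinite μ] [SigmaFinite ν]
    {p : ℝ} (hp : 1 ≤ p) (F : α → β → ℝ≥0∞) (hF : Measurable (Function.uncurry F)) :
    (∫⁻ x, (∫⁻ v, F x v ∂ν) ^ p ∂μ) ^ (1 / p)
      ≤ ∫⁻ v, (∫⁻ x, F x v ^ p ∂μ) ^ (1 / p) ∂ν := by
  have hΦ : Measurable fun x => ∫⁻ v, F x v ∂ν := hF.lintegral_prod_right
  rcases eq_or_lt_of_le hp with hp1 | hp1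
  · simp only [← hp1, ENNReal.rpow_one, one_div, inv_one]
    exact le_of_eq (lintegral_lintegral_swap hF.aemeasurable)
  have hp0 : 0 < p := by linarith
  set q : ℝ := p.conjExponent with hqdef
  have hpq : p.HolderConjugate q := Real.HolderConjugate.conjExponent hp1
  set Φ : α → ℝ≥0∞ := fun x => ∫⁻ v, F x v ∂ν with hΦdef
  set B : ℝ≥0∞ := ∫⁻ v, (∫⁻ x, F x v ^ p ∂μ) ^ (1 / p) ∂ν with hBdef
  set s : ℕ → Set α := spanningSets μ with hsdef
  set G : ℕ → α → ℝ≥0∞ := fun n x => (s n).indicator (fun x => min (Φ x) n) x with hGdef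
  have hGmeas : ∀ n, Measurable (G n) := fun n =>
    (hΦ.min measurable_const).indicator (measurableSet_spanningSets μ n)
  have hGle : ∀ n x, G n x ≤ Φ x := by
    intro n x
    by_cases hx : x ∈ s n
    · simp [G, Set.indicator_of_mem hx]
    · simp [G, Set.indicator_of_notMem hx]
  have hGleN : ∀ n x, G n x ≤ (n : ℝ≥0∞) := by
    intro n x
    by_cases hx : x ∈ s n
    · simp [G, Set.indicator_of_mem hx]
    · simp [G, Set.indicator_of_notMem hx]
  have hGnetop : ∀ n x, G n x ≠ ⊤ := fun n x =>
    ((hGleN n x).trans_lt (ENNReal.natCast_lt_top n)).ne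
  have hGmono : Monotone G := by
    intro m n h x
    by_cases hx : x ∈ s m
    · have hx' : x ∈ s n := monotone_spanningSets μ h hx
      simp only [G, Set.indicator_of_mem hx, Set.indicator_of_mem hx']
      exact min_le_min le_rfl (Nat.cast_le.2 h)
    · simp [G, Set.indicator_of_notMem hx]
  have hGsup : ∀ x, (⨆ n, G n x) = Φ x := by
    intro x
    obtain ⟨N1, hN1⟩ : ∃ n, x ∈ s n := by
      have : x ∈ ⋃ n, s n := by rw [hsdef, iUnion_spanningSets]; trivial
      exact mem_iUnion.1 this
    refine le_antisymm (iSup_le fun n => hGle n x) ?_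
    have key : ∀ m : ℕ, min (Φ x) (m : ℝ≥0∞) ≤ ⨆ n, G n x := by
      intro m
      have hx : x ∈ s (max m N1) := monotone_spanningSets μ (le_max_right _ _) hN1
      calc min (Φ x) (m : ℝ≥0∞) ≤ min (Φ x) ((max m N1 : ℕ) : ℝ≥0∞) :=
            min_le_min le_rfl (Nat.cast_le.2 (le_max_left _ _))
        _ = G (max m N1) x := by simp [G, Set.indicator_of_mem hx]
        _ ≤ ⨆ n, G n x := le_iSup (fun n => G n x) (max m N1)
    rcases eq_or_ne (Φ x) ⊤ with h | h
    · have : ∀ m : ℕ, (m : ℝ≥0∞) ≤ ⨆ n, G n x := fun m => by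
        simpa [h] using key m
      calc Φ x = ⊤ := h
        _ = ⨆ m : ℕ, (m : ℝ≥0∞) := ENNReal.iSup_natCast.symm
        _ ≤ ⨆ n, G n x := iSup_le this
    · obtain ⟨m, hm⟩ := ENNReal.exists_nat_gt h
      exact le_trans (le_of_eq (min_eq_left hm.le).symm) (key m)
  have hA_mono : Monotone (fun n => ∫⁻ x, G n x ^ p ∂μ) := fun m n h =>
    lintegral_mono fun x => ENNReal.rpow_le_rpow (hGmono h x) hp0.le
  have hA_lt_top : ∀ n, ∫⁻ x, G n x ^ p ∂μ < ⊤ := by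
    intro n
    calc ∫⁻ x, G n x ^ p ∂μ
        ≤ ∫⁻ x, (s n).indicator (fun _ => (n : ℝ≥0∞) ^ p) x ∂μ := by
          refine lintegral_mono fun x => ?_
          by_cases hx : x ∈ s n
          · simp only [Set.indicator_of_mem hx]
            exact ENNReal.rpow_le_rpow (hGleN n x) hp0.le
          · simp [G, Set.indicator_of_notMem hx, ENNReal.zero_rpow_of_pos hp0]
      _ = (n : ℝ≥0∞) ^ p * μ (s n) :=
          lintegral_indicator_const (measurableSet_spanningSets μ n) _
      _ < ⊤ := ENNReal.mul_lt_top
          (ENNReal.rpow_lt_top_of_nonneg hp0.le (ENNReal.natCast_ne_top n))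
          (measure_spanningSets_lt_top μ n)
  have key : ∀ n, (∫⁻ x, G n x ^ p ∂μ) ^ (1 / p) ≤ B := by
    intro n
    set A : ℝ≥0∞ := ∫⁻ x, G n x ^ p ∂μ with hAdef
    rcases eq_or_ne A 0 with h0 | h0
    · rw [h0, ENNReal.zero_rpow_of_pos (by positivity)]
      exact zero_le
    have hGp1_netop : ∀ x, G n x ^ (p - 1) ≠ ⊤ := fun x =>
      ENNReal.rpow_ne_top_of_nonneg (by linarith) (hGnetop n x)
    have hmeasmul : Measurable (uncurry fun x v => G n x ^ (p - 1) * F x v) := by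
      exact (((hGmeas n).comp measurable_fst).pow_const _).mul hF
    have hAq_ne_top : A ^ (1 / q) ≠ ⊤ :=
      ENNReal.rpow_ne_top_of_nonneg (by have := hpq.symm.pos; positivity) (hA_lt_top n).ne
    have step : A ≤ A ^ (1 / q) * B := by
      have e1 : A ≤ ∫⁻ x, G n x ^ (p - 1) * Φ x ∂μ := by
        refine lintegral_mono fun x => ?_
        rcases eq_or_ne (G n x) 0 with h | h
        · simp [h, ENNReal.zero_rpow_of_pos hp0]
        · have : G n x ^ p = G n x ^ (p - 1) * G n x := by
            conv_lhs => rw [show p = (p - 1) + 1 by ring]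
            rw [ENNReal.rpow_add _ _ h (hGnetop n x), ENNReal.rpow_one]
          rw [this]
          exact mul_le_mul_right (hGle n x) _
      have e2 : ∫⁻ x, G n x ^ (p - 1) * Φ x ∂μ
          = ∫⁻ v, ∫⁻ x, G n x ^ (p - 1) * F x v ∂μ ∂ν := by
        have : ∀ x, G n x ^ (p - 1) * Φ x = ∫⁻ v, G n x ^ (p - 1) * F x v ∂ν := fun x =>
          (lintegral_const_mul' _ _ (hGp1_netop x)).symm
        simp_rw [this]
        exact lintegral_lintegral_swap hmeasmul.aemeasurable
      have e3 : ∀ v, ∫⁻ x, G n x ^ (p - 1) * F x v ∂μ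
          ≤ A ^ (1 / q) * (∫⁻ x, F x v ^ p ∂μ) ^ (1 / p) := by
        intro v
        have hmF : Measurable fun x => F x v :=
          hF.comp (measurable_id.prodMk measurable_const)
        calc ∫⁻ x, G n x ^ (p - 1) * F x v ∂μ
            = ∫⁻ x, ((fun x => G n x ^ (p - 1)) * fun x => F x v) x ∂μ := rfl
          _ ≤ (∫⁻ x, (G n x ^ (p - 1)) ^ q ∂μ) ^ (1 / q)
                * (∫⁻ x, F x v ^ p ∂μ) ^ (1 / p) :=
              ENNReal.lintegral_mul_le_Lp_mul_Lq μ hpq.symm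
                (((hGmeas n).pow_const _).aemeasurable) hmF.aemeasurable
          _ = A ^ (1 / q) * (∫⁻ x, F x v ^ p ∂μ) ^ (1 / p) := by
              congr 2
              refine lintegral_congr fun x => ?_
              rw [← ENNReal.rpow_mul, hpq.sub_one_mul_conj]
      calc A ≤ ∫⁻ x, G n x ^ (p - 1) * Φ x ∂μ := e1
        _ = ∫⁻ v, ∫⁻ x, G n x ^ (p - 1) * F x v ∂μ ∂ν := e2
        _ ≤ ∫⁻ v, A ^ (1 / q) * (∫⁻ x, F x v ^ p ∂μ) ^ (1 / p) ∂ν := lintegral_mono e3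
        _ = A ^ (1 / q) * B := lintegral_const_mul' _ _ hAq_ne_top
    have hAq_ne_zero : A ^ (1 / q) ≠ 0 := by
      simp only [ne_eq, ENNReal.rpow_eq_zero_iff, not_or]
      constructor
      · rintro ⟨h, -⟩; exact h0 h
      · rintro ⟨h, -⟩; exact (hA_lt_top n).ne h
    have hdiv : A / A ^ (1 / q) ≤ B := ENNReal.div_le_of_le_mul (by rwa [mul_comm] at step)
    have : A ^ (1 / p) = A / A ^ (1 / q) := by
      have h1 : 1 / p = 1 - 1 / q := by
        have := hpq.inv_add_inv_eq_one
        rw [one_div, one_div]; linarith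
      rw [h1, ENNReal.rpow_sub _ _ h0 (hA_lt_top n).ne, ENNReal.rpow_one]
    rw [this]; exact hdiv
  have hsup : (∫⁻ x, Φ x ^ p ∂μ) = ⨆ n, ∫⁻ x, G n x ^ p ∂μ := by
    rw [← lintegral_iSup (fun n => (hGmeas n).pow_const _)
      (fun m n h x => ENNReal.rpow_le_rpow (hGmono h x) hp0.le)]
    refine lintegral_congr fun x => ?_
    rw [← hGsup x, rpow_iSup_mono hp0 _ (fun m n h => hGmono h x)]
  calc (∫⁻ x, Φ x ^ p ∂μ) ^ (1 / p)
      = (⨆ n, ∫⁻ x, G n x ^ p ∂μ) ^ (1 / p) := by rw [hsup]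
    _ = ⨆ n, (∫⁻ x, G n x ^ p ∂μ) ^ (1 / p) := rpow_iSup_mono (by positivity) _ hA_mono
    _ ≤ B := iSup_le key
private lemma scale_cube (k : ℕ) (g : (Fin k → ℝ) → ℝ≥0∞) (hg : Measurable g)
    {x : ℝ} (hx : 0 < x) :
    ∫⁻ y in Set.pi Set.univ (fun _ : Fin k => Set.Ioo (0 : ℝ) x), g y
      = ENNReal.ofReal (x ^ k)
          * ∫⁻ v in Set.pi Set.univ (fun _ : Fin k => Set.Ioo (0 : ℝ) 1),
              g (fun i => x * v i) := by
  set cubex := Set.pi Set.univ (fun _ : Fin k => Set.Ioo (0 : ℝ) x) with hcx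
  set cube1 := Set.pi Set.univ (fun _ : Fin k => Set.Ioo (0 : ℝ) 1) with hc1
  have hmx : MeasurableSet cubex := MeasurableSet.univ_pi fun i => measurableSet_Ioo
  have hm1 : MeasurableSet cube1 := MeasurableSet.univ_pi fun i => measurableSet_Ioo
  have hsv : ∀ v : Fin k → ℝ, (fun i => x * v i) = x • v := fun v => by
    funext i; simp [Pi.smul_apply, smul_eq_mul]
  have hsmul : Measurable (fun v : Fin k → ℝ => x • v) := measurable_const_smul x
  have hmem : ∀ v : Fin k → ℝ, x • v ∈ cubex ↔ v ∈ cube1 := by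
    intro v
    simp only [hcx, hc1, Set.mem_pi, Set.mem_univ, forall_true_left, Set.mem_Ioo,
      Pi.smul_apply, smul_eq_mul, true_implies]
    exact forall_congr' fun i =>
      and_congr (mul_pos_iff_of_pos_left hx) (mul_lt_iff_lt_one_right hx)
  have hmap : Measure.map (fun v : Fin k → ℝ => x • v) volume
      = ENNReal.ofReal ((x ^ k)⁻¹) • volume := by
    have h := Measure.map_addHaar_smul (μ := (volume : Measure (Fin k → ℝ))) hx.ne'
    rw [h]
    congr 1
    rw [Module.finrank_fin_fun, abs_of_nonneg (by positivity)]
  have key : ∫⁻ v in cube1, g (x • v)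
      = ENNReal.ofReal ((x ^ k)⁻¹) * ∫⁻ y in cubex, g y := by
    calc ∫⁻ v in cube1, g (x • v)
        = ∫⁻ v, cube1.indicator (fun v => g (x • v)) v := (lintegral_indicator hm1 _).symm
      _ = ∫⁻ v, cubex.indicator g (x • v) := by
          refine lintegral_congr fun v => ?_
          by_cases hv : v ∈ cube1
          · rw [Set.indicator_of_mem hv, Set.indicator_of_mem ((hmem v).2 hv)]
          · rw [Set.indicator_of_notMem hv,
              Set.indicator_of_notMem (fun h => hv ((hmem v).1 h))]
      _ = ∫⁻ y, cubex.indicator g y ∂(Measure.map (fun v : Fin k → ℝ => x • v) volume) :=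
          (lintegral_map (hg.indicator hmx) hsmul).symm
      _ = ENNReal.ofReal ((x ^ k)⁻¹) * ∫⁻ y in cubex, g y := by
          rw [hmap, lintegral_smul_measure, lintegral_indicator hmx, smul_eq_mul]
  simp_rw [hsv]
  rw [key, ← mul_assoc, ← ENNReal.ofReal_mul (by positivity),
    mul_inv_cancel₀ (by positivity : (x : ℝ) ^ k ≠ 0), ENNReal.ofReal_one, one_mul]
end Helpers

/-- **Lemma (Hardy-type inequality).**
Let `f ≥ 0` be measurable on `(0,∞)^k`, `r > 0`, `p ≥ 1` and `k` a positive integer. Then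
`(∫_0^∞ (∫_{(0,x)^k} f)^p x^{-r-1} dx)^{1/p}
  ≤ ∫_{(0,1)^k} (∫_0^∞ (x^k f(xv₁,…,xv_k))^p x^{-r-1} dx)^{1/p} dv`. -/
theorem hardy_type_inequality (k : ℕ) (hk : 0 < k) (f : (Fin k → ℝ) → ℝ)
    (hf : Measurable f) (hf0 : ∀ y, 0 ≤ f y) (r p : ℝ) (hr : 0 < r) (hp : 1 ≤ p) :
    (∫⁻ x in Set.Ioi (0 : ℝ),
        (∫⁻ y in Set.pi Set.univ (fun _ : Fin k => Set.Ioo (0 : ℝ) x),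
            ENNReal.ofReal (f y)) ^ p * ENNReal.ofReal (x ^ (-r - 1))) ^ (1 / p)
      ≤ ∫⁻ v in Set.pi Set.univ (fun _ : Fin k => Set.Ioo (0 : ℝ) 1),
          (∫⁻ x in Set.Ioi (0 : ℝ),
              ENNReal.ofReal (x ^ k * f (fun i => x * v i)) ^ p *
                ENNReal.ofReal (x ^ (-r - 1))) ^ (1 / p) := by
  have hp0 : 0 < p := by linarith
  set w : ℝ → ℝ≥0∞ := fun x => ENNReal.ofReal (x ^ (-r - 1)) with hwdef
  set F : ℝ → (Fin k → ℝ) → ℝ≥0∞ :=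
    fun x v => ENNReal.ofReal (x ^ k * f (fun i => x * v i)) * w x ^ (1 / p) with hFdef
  set cube1 := Set.pi Set.univ (fun _ : Fin k => Set.Ioo (0 : ℝ) 1) with hc1
  have hwmeas : Measurable w :=
    ENNReal.measurable_ofReal.comp (measurable_id.pow_const (-r - 1))
  have hFmeas : Measurable (Function.uncurry F) := by
    apply Measurable.mul
    · apply ENNReal.measurable_ofReal.comp
      exact (measurable_fst.pow_const k).mul
        (hf.comp (measurable_pi_lambda _ fun i =>
          measurable_fst.mul ((measurable_pi_apply i).comp measurable_snd)))
    · exact ((hwmeas.comp measurable_fst).pow_const _)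
  have hwp : ∀ x : ℝ, (w x ^ (1 / p)) ^ p = w x := fun x => by
    rw [← ENNReal.rpow_mul, one_div, inv_mul_cancel₀ hp0.ne', ENNReal.rpow_one]
  have hwp_ne_top : ∀ x : ℝ, w x ^ (1 / p) ≠ ⊤ := fun x =>
    ENNReal.rpow_ne_top_of_nonneg (by positivity) ENNReal.ofReal_ne_top
  -- rewrite the LHS
  have hL : ∫⁻ x in Set.Ioi (0 : ℝ),
        (∫⁻ y in Set.pi Set.univ (fun _ : Fin k => Set.Ioo (0 : ℝ) x),
            ENNReal.ofReal (f y)) ^ p * w x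
      = ∫⁻ x in Set.Ioi (0 : ℝ), (∫⁻ v in cube1, F x v) ^ p := by
    refine setLIntegral_congr_fun measurableSet_Ioi ?_
    intro x hx
    have hx0 : (0 : ℝ) < x := hx
    have hscale := scale_cube k (fun y => ENNReal.ofReal (f y))
      (ENNReal.measurable_ofReal.comp hf) hx0
    have hinner : ∫⁻ v in cube1, F x v
        = (∫⁻ y in Set.pi Set.univ (fun _ : Fin k => Set.Ioo (0 : ℝ) x),
            ENNReal.ofReal (f y)) * w x ^ (1 / p) := by
      rw [hscale]
      rw [show (∫⁻ v in cube1, F x v)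
          = ∫⁻ v in cube1, ENNReal.ofReal (x ^ k) * ENNReal.ofReal (f (fun i => x * v i))
              * w x ^ (1 / p) from lintegral_congr fun v => by
            rw [hFdef]; rw [← ENNReal.ofReal_mul (by positivity)]]
      rw [lintegral_mul_const' _ _ (hwp_ne_top x), lintegral_const_mul' _ _
        ENNReal.ofReal_ne_top]
    beta_reduce
    rw [hinner, ENNReal.mul_rpow_of_nonneg _ _ hp0.le, hwp]
  -- rewrite the RHS
  have hR : ∀ v : Fin k → ℝ,
      ∫⁻ x in Set.Ioi (0 : ℝ),
          ENNReal.ofReal (x ^ k * f (fun i => x * v i)) ^ p * w x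
        = ∫⁻ x in Set.Ioi (0 : ℝ), F x v ^ p := by
    intro v
    refine lintegral_congr fun x => ?_
    rw [hFdef, ENNReal.mul_rpow_of_nonneg _ _ hp0.le, hwp]
  calc (∫⁻ x in Set.Ioi (0 : ℝ),
        (∫⁻ y in Set.pi Set.univ (fun _ : Fin k => Set.Ioo (0 : ℝ) x),
            ENNReal.ofReal (f y)) ^ p * w x) ^ (1 / p)
      = (∫⁻ x in Set.Ioi (0 : ℝ), (∫⁻ v in cube1, F x v) ^ p) ^ (1 / p) := by rw [hL]
    _ ≤ ∫⁻ v in cube1, (∫⁻ x in Set.Ioi (0 : ℝ), F x v ^ p) ^ (1 / p) :=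
        minkowski_lintegral (volume.restrict (Set.Ioi (0 : ℝ)))
          (volume.restrict cube1) hp F hFmeas
    _ = ∫⁻ v in cube1,
          (∫⁻ x in Set.Ioi (0 : ℝ),
              ENNReal.ofReal (x ^ k * f (fun i => x * v i)) ^ p * w x) ^ (1 / p) := by
        refine lintegral_congr fun v => ?_
        rw [hR v]
end

section
/- Let k be a positive integer, f : ℝ → ℝ a k-times continuously differentiable function, t ∈ ℝ and s ≥ 0. Then the k-th order forward difference satisfies Δ_s^k(f,t) = ∫_0^s ⋯ ∫_0^s f^{(k)}(t + v₁ + ⋯ + v_k) dv_k⋯dv₁. -/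
open MeasureTheory Real Set
open scoped ENNReal NNReal

/-- The `k`-th order forward difference of `f` starting at `t` with increment `s`:
`Δ_s^k(f,t) = Σ_{j=0}^k C(k,j)(-1)^j f(t + (k-j)s)`. -/
noncomputable def forwardDiff (k : ℕ) (f : ℝ → ℝ) (t s : ℝ) : ℝ :=
  ∑ j ∈ Finset.range (k + 1), (k.choose j : ℝ) * (-1) ^ j * f (t + ((k - j : ℕ) : ℝ) * s)

open fwdDiff in
lemma forwardDiff_eq_fwdDiff_iter (k : ℕ) (f : ℝ → ℝ) (t s : ℝ) :
    forwardDiff k f t s = (Δ_[s])^[k] f t := by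
  rw [fwdDiff_iter_eq_sum_shift, forwardDiff, ← Finset.sum_range_reflect]
  refine Finset.sum_congr rfl fun j hj => ?_
  rw [Finset.mem_range, Nat.lt_succ_iff] at hj
  rw [Nat.add_sub_cancel, Nat.sub_sub_self hj, Nat.choose_symm hj]
  rw [zsmul_eq_mul, nsmul_eq_mul]
  push_cast
  ring

open fwdDiff in
lemma fwdDiff_iter_eq_integral (s : ℝ) (hs : 0 ≤ s) :
    ∀ (k : ℕ) (f : ℝ → ℝ), ContDiff ℝ (k : ℕ∞) f → ∀ t : ℝ,
      (Δ_[s])^[k] f t =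
        ∫ v in Set.pi Set.univ (fun _ : Fin k => Set.Ioc (0 : ℝ) s),
          iteratedDeriv k f (t + ∑ i, v i) := by
  intro k
  induction k with
  | zero =>
    intro f hf t
    have h1 : (Set.pi Set.univ (fun _ : Fin 0 => Set.Ioc (0 : ℝ) s)) = Set.univ := by
      ext v; simp
    simp only [Function.iterate_zero, id_eq, iteratedDeriv_zero, Finset.univ_eq_empty,
      Finset.sum_empty, add_zero, h1, Measure.restrict_univ]
    rw [integral_const]
    simp [volume_pi, Measure.pi_univ, measureReal_def]
  | succ k IH =>
    intro f hf t
    set D := iteratedDeriv (k + 1) f with hD_def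
    have hD : Continuous D := hf.continuous_iteratedDeriv (k + 1) (by exact_mod_cast le_rfl)
    have hfk : ContDiff ℝ (k : ℕ∞) f := hf.of_le (by exact_mod_cast Nat.le_succ k)
    -- the shifted difference is C^k
    have hshift : ContDiff ℝ (k : ℕ∞) (fun x : ℝ => f (x + s)) :=
      hfk.comp (contDiff_id.add contDiff_const)
    have hg : ContDiff ℝ (k : ℕ∞) (Δ_[s] f) := hshift.sub hfk
    -- derivative of the k-th iterated derivative
    have hDer : ∀ x : ℝ, HasDerivAt (iteratedDeriv k f) (D x) x := by
      intro x
      have hdiff : Differentiable ℝ (iteratedDeriv k f) :=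
        hf.differentiable_iteratedDeriv k (by exact_mod_cast Nat.lt_succ_self k)
      have h := (hdiff x).hasDerivAt
      have : D x = deriv (iteratedDeriv k f) x := by rw [hD_def, iteratedDeriv_succ]
      rwa [← this] at h
    -- key formula for the iterated derivative of the difference
    have key : ∀ x : ℝ, iteratedDeriv k (Δ_[s] f) x = ∫ w in Set.Ioc (0 : ℝ) s, D (x + w) := by
      intro x
      have hsub : iteratedDeriv k (Δ_[s] f) x =
          iteratedDeriv k (fun z => f (z + s)) x - iteratedDeriv k f x := by
        have := iteratedDerivWithin_sub (𝕜 := ℝ) (s := (Set.univ : Set ℝ))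
          (x := x) (n := k) (f := fun z => f (z + s)) (g := f)
          (Set.mem_univ x) uniqueDiffOn_univ
          hshift.contDiffWithinAt hfk.contDiffWithinAt
        simp only [iteratedDerivWithin_univ] at this
        exact this
      have hcomp : iteratedDeriv k (fun z => f (z + s)) x = iteratedDeriv k f (x + s) := by
        rw [iteratedDeriv_comp_add_const]
      have hftc : ∫ w in x..(x + s), D w = iteratedDeriv k f (x + s) - iteratedDeriv k f x := by
        apply intervalIntegral.integral_eq_sub_of_hasDerivAt (fun y _ => hDer y)
        exact hD.intervalIntegrable _ _
      have hch : ∫ w in (0 : ℝ)..s, D (x + w) = ∫ w in x..(x + s), D w := by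
        rw [intervalIntegral.integral_comp_add_left (fun w => D w) x, add_zero]
      rw [hsub, hcomp, ← hftc, ← hch, intervalIntegral.integral_of_le hs]
    -- apply induction hypothesis to the difference
    rw [Function.iterate_succ_apply, IH (Δ_[s] f) hg t]
    have hIH : ∫ v in Set.pi Set.univ (fun _ : Fin k => Set.Ioc (0 : ℝ) s),
          iteratedDeriv k (Δ_[s] f) (t + ∑ i, v i)
        = ∫ v in Set.pi Set.univ (fun _ : Fin k => Set.Ioc (0 : ℝ) s),
            ∫ w in Set.Ioc (0 : ℝ) s, D (t + ∑ i, v i + w) := by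
      exact setIntegral_congr_fun (MeasurableSet.univ_pi fun _ => measurableSet_Ioc)
        fun v _ => key _
    rw [hIH]
    -- Fubini setup
    set cube := Set.pi Set.univ (fun _ : Fin k => Set.Ioc (0 : ℝ) s) with hcube
    have hcube_meas : MeasurableSet cube := MeasurableSet.univ_pi fun _ => measurableSet_Ioc
    have hG : Continuous fun p : ℝ × (Fin k → ℝ) => D (t + p.1 + ∑ i, p.2 i) := by
      apply hD.comp
      exact (continuous_const.add continuous_fst).add
        (continuous_finset_sum _ fun i _ => (continuous_apply i).comp continuous_snd)
    have hGint : IntegrableOn (fun p : ℝ × (Fin k → ℝ) => D (t + p.1 + ∑ i, p.2 i))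
        (Set.Ioc 0 s ×ˢ cube) (volume.prod volume) := by
      have hK : IsCompact ((Set.Icc 0 s : Set ℝ) ×ˢ Set.pi Set.univ
          (fun _ : Fin k => Set.Icc (0 : ℝ) s)) :=
        isCompact_Icc.prod (isCompact_univ_pi fun _ => isCompact_Icc)
      have hsub : (Set.Ioc 0 s ×ˢ cube : Set (ℝ × (Fin k → ℝ))) ⊆
          (Set.Icc 0 s ×ˢ Set.pi Set.univ (fun _ : Fin k => Set.Icc (0 : ℝ) s)) := by
        refine Set.prod_mono Set.Ioc_subset_Icc_self ?_
        exact Set.pi_mono fun _ _ => Set.Ioc_subset_Icc_self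
      have : IntegrableOn (fun p : ℝ × (Fin k → ℝ) => D (t + p.1 + ∑ i, p.2 i))
          ((Set.Icc 0 s : Set ℝ) ×ˢ Set.pi Set.univ (fun _ : Fin k => Set.Icc (0 : ℝ) s))
          (volume.prod volume) := hG.continuousOn.integrableOn_compact hK
      exact this.mono_set hsub
    -- swap the order of integration
    have hswap : (∫ v in cube, ∫ w in Set.Ioc (0 : ℝ) s, D (t + ∑ i, v i + w))
        = ∫ w in Set.Ioc (0 : ℝ) s, ∫ v in cube, D (t + w + ∑ i, v i) := by
      have h1 : ∀ v : Fin k → ℝ, ∀ w : ℝ, D (t + ∑ i, v i + w) = D (t + w + ∑ i, v i) := by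
        intro v w; ring_nf
      simp only [h1]
      have hint2 : Integrable (Function.uncurry fun (v : Fin k → ℝ) (w : ℝ) =>
          D (t + w + ∑ i, v i)) ((volume.restrict cube).prod (volume.restrict (Set.Ioc 0 s))) := by
        rw [Measure.prod_restrict]
        have hK : IsCompact ((Set.pi Set.univ (fun _ : Fin k => Set.Icc (0 : ℝ) s)) ×ˢ
            (Set.Icc 0 s : Set ℝ)) :=
          (isCompact_univ_pi fun _ => isCompact_Icc).prod isCompact_Icc
        have hG' : Continuous fun p : (Fin k → ℝ) × ℝ => D (t + p.2 + ∑ i, p.1 i) := by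
          apply hD.comp
          exact (continuous_const.add continuous_snd).add
            (continuous_finset_sum _ fun i _ => (continuous_apply i).comp continuous_fst)
        have : IntegrableOn (fun p : (Fin k → ℝ) × ℝ => D (t + p.2 + ∑ i, p.1 i))
            ((Set.pi Set.univ (fun _ : Fin k => Set.Icc (0 : ℝ) s)) ×ˢ
              (Set.Icc 0 s : Set ℝ)) (volume.prod volume) :=
          hG'.continuousOn.integrableOn_compact hK
        exact this.mono_set (Set.prod_mono
          (Set.pi_mono fun _ _ => Set.Ioc_subset_Icc_self) Set.Ioc_subset_Icc_self)
      exact integral_integral_swap hint2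
    rw [hswap]
    -- now combine into an integral over the (k+1)-cube
    have hprod : (∫ w in Set.Ioc (0 : ℝ) s, ∫ v in cube, D (t + w + ∑ i, v i))
        = ∫ p in (Set.Ioc (0 : ℝ) s ×ˢ cube),
            D (t + p.1 + ∑ i, p.2 i) ∂(volume.prod volume) :=
      (setIntegral_prod _ hGint).symm
    rw [hprod]
    -- measure-preserving equivalence
    have hmp := volume_preserving_piFinSuccAbove (fun _ : Fin (k + 1) => ℝ) 0
    set e := MeasurableEquiv.piFinSuccAbove (fun _ : Fin (k + 1) => ℝ) 0 with he_def
    have hpre : e ⁻¹' (Set.Ioc (0 : ℝ) s ×ˢ cube) =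
        Set.pi Set.univ (fun _ : Fin (k + 1) => Set.Ioc (0 : ℝ) s) := by
      ext v
      simp only [Set.mem_preimage, Set.mem_prod, Set.mem_pi, Set.mem_univ, forall_true_left,
        hcube, he_def, MeasurableEquiv.piFinSuccAbove_apply, Fin.insertNthEquiv,
        Equiv.coe_fn_symm_mk]
      rw [Fin.forall_fin_succ]
      simp [Fin.succAbove, Fin.removeNth, Fin.lt_def, Fin.succ_pos]
    have := hmp.setIntegral_preimage_emb e.measurableEmbedding
      (fun p : ℝ × (Fin k → ℝ) => D (t + p.1 + ∑ i, p.2 i)) (Set.Ioc (0 : ℝ) s ×ˢ cube)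
    rw [← Measure.volume_eq_prod, ← this, hpre]
    refine setIntegral_congr_fun (MeasurableSet.univ_pi fun _ => measurableSet_Ioc)
      fun v _ => ?_
    have hsum : (∑ i : Fin (k + 1), v i) = v 0 + ∑ i : Fin k, v ((0 : Fin (k+1)).succAbove i) :=
      Fin.sum_univ_succAbove v 0
    simp only [he_def, MeasurableEquiv.piFinSuccAbove_apply, Fin.insertNthEquiv,
      Equiv.coe_fn_symm_mk]
    rw [hsum, ← add_assoc]
    rfl

/-- **Lemma.** For `k ≥ 1`, `f` of class `C^k`, `t ∈ ℝ` and `s ≥ 0`,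
`Δ_s^k(f,t) = ∫_0^s ⋯ ∫_0^s f^{(k)}(t + v₁ + ⋯ + v_k) dv_k ⋯ dv₁`
(the integral over the cube `(0,s]^k`). -/
theorem forwardDiff_eq_iterated_integral (k : ℕ) (hk : 0 < k) (f : ℝ → ℝ)
    (hf : ContDiff ℝ (k : ℕ∞) f) (t s : ℝ) (hs : 0 ≤ s) :
    forwardDiff k f t s =
      ∫ v in Set.pi Set.univ (fun _ : Fin k => Set.Ioc (0 : ℝ) s),
        iteratedDeriv k f (t + ∑ i, v i) := by
  rw [forwardDiff_eq_fwdDiff_iter]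
  exact fwdDiff_iter_eq_integral s hs k f hf t
end

section
/- Let 1 ≤ p < ∞, f ∈ L^p(γ_d) and n a positive integer. There exists a constant C_n > 0 (independent of f) such that for all t > 0 and γ_d-almost every x ∈ ℝ^d, |∂^n/∂t^n P_t f(x)| ≤ C_n T*f(x) t^{−n}, where T*f(x) = sup_{t>0} |T_t f(x)| is the maximal function of the Ornstein–Uhlenbeck semigroup. -/
open MeasureTheory Real Set
open scoped ENNReal NNReal

/-- The Gaussian measure `γ_d(dx) = π^{-d/2} e^{-‖x‖²} dx` on `ℝ^d`. -/
noncomputable def gaussMeasure (d : ℕ) : Measure (Fin d → ℝ) :=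
  (volume : Measure (Fin d → ℝ)).withDensity
    (fun x => ENNReal.ofReal (Real.exp (-(∑ i, (x i) ^ 2)) / Real.pi ^ ((d : ℝ) / 2)))

/-- The Ornstein–Uhlenbeck semigroup `T_t`, with `T_0 f = f`. -/
noncomputable def ouSemigroup (d : ℕ) (t : ℝ) (f : (Fin d → ℝ) → ℝ) (x : Fin d → ℝ) : ℝ :=
  if t = 0 then f x
  else (Real.pi ^ ((d : ℝ) / 2) * (1 - Real.exp (-2 * t)) ^ ((d : ℝ) / 2))⁻¹ *
    ∫ y : Fin d → ℝ,
      Real.exp (-(∑ i, (y i - Real.exp (-t) * x i) ^ 2) / (1 - Real.exp (-2 * t))) * f y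

/-- The Poisson–Hermite semigroup `P_t f(x) = π^{-1/2} ∫_0^∞ u^{-1/2} e^{-u} T_{t²/4u} f(x) du`. -/
noncomputable def poissonHermite (d : ℕ) (t : ℝ) (f : (Fin d → ℝ) → ℝ) (x : Fin d → ℝ) : ℝ :=
  (Real.pi ^ ((1 : ℝ) / 2))⁻¹ *
    ∫ u in Set.Ioi (0 : ℝ), u ^ (-(1 : ℝ) / 2) * Real.exp (-u) *
      ouSemigroup d (t ^ 2 / (4 * u)) f x

namespace PHaux

lemma pow_mul_exp_le (i : ℕ) (v : ℝ) :
    |v| ^ i * Real.exp (-(v ^ 2 / 8)) ≤ 1 + 8 ^ i * (Nat.factorial i : ℝ) := by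
  have hx : (0:ℝ) ≤ v ^ 2 / 8 := by positivity
  have hfac : (0:ℝ) < (Nat.factorial i : ℝ) := by exact_mod_cast Nat.factorial_pos i
  have h1 : (v ^ 2 / 8) ^ i / (Nat.factorial i : ℝ) ≤ Real.exp (v ^ 2 / 8) := by
    refine le_trans ?_ (Real.sum_le_exp_of_nonneg hx (i + 1))
    have := Finset.single_le_sum (f := fun k => (v ^ 2 / 8) ^ k / (Nat.factorial k : ℝ))
      (fun k _ => by positivity) (Finset.self_mem_range_succ i)
    simpa using this
  have h2 : v ^ (2 * i) * Real.exp (-(v ^ 2 / 8)) ≤ 8 ^ i * (Nat.factorial i : ℝ) := by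
    have hv : v ^ (2 * i) = 8 ^ i * (v ^ 2 / 8) ^ i := by
      rw [pow_mul, ← mul_pow]; ring_nf
    have h3 : (v ^ 2 / 8) ^ i ≤ (Nat.factorial i : ℝ) * Real.exp (v ^ 2 / 8) := by
      rw [div_le_iff₀ hfac] at h1; linarith
    rw [hv, Real.exp_neg, mul_assoc]
    refine mul_le_mul_of_nonneg_left ?_ (by positivity)
    calc (v ^ 2 / 8) ^ i * (Real.exp (v ^ 2 / 8))⁻¹
        ≤ ((Nat.factorial i : ℝ) * Real.exp (v ^ 2 / 8)) * (Real.exp (v ^ 2 / 8))⁻¹ :=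
          mul_le_mul_of_nonneg_right h3 (by positivity)
      _ = (Nat.factorial i : ℝ) := by
          field_simp
  have habs : |v| ^ i ≤ 1 + v ^ (2 * i) := by
    have hnn : (0:ℝ) ≤ v ^ (2 * i) := by rw [pow_mul]; positivity
    rcases le_total (|v|) 1 with h | h
    · have h4 : |v| ^ i ≤ 1 := pow_le_one₀ (abs_nonneg v) h
      linarith
    · have h5 : |v| ^ i ≤ |v| ^ (2 * i) := pow_le_pow_right₀ h (by omega)
      have h2i : |v| ^ (2 * i) = v ^ (2 * i) := by
        rw [← abs_pow, abs_of_nonneg hnn]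
      linarith [h5, h2i.le]
  have hexp1 : Real.exp (-(v ^ 2 / 8)) ≤ 1 := Real.exp_le_one_iff.mpr (neg_nonpos.mpr (by positivity))
  calc |v| ^ i * Real.exp (-(v ^ 2 / 8)) ≤ (1 + v ^ (2 * i)) * Real.exp (-(v ^ 2 / 8)) :=
        mul_le_mul_of_nonneg_right habs (Real.exp_nonneg _)
    _ = Real.exp (-(v ^ 2 / 8)) + v ^ (2 * i) * Real.exp (-(v ^ 2 / 8)) := by ring
    _ ≤ 1 + 8 ^ i * (Nat.factorial i : ℝ) := by gcongr

lemma poly_bound (q : Polynomial ℝ) :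
    ∃ C : ℝ, 0 < C ∧ ∀ v : ℝ, |q.eval v| * Real.exp (-(v ^ 2 / 8)) ≤ C := by
  classical
  refine ⟨(∑ i ∈ Finset.range (q.natDegree + 1),
      |q.coeff i| * (1 + 8 ^ i * (Nat.factorial i : ℝ))) + 1, ?_, ?_⟩
  · have : (0:ℝ) ≤ ∑ i ∈ Finset.range (q.natDegree + 1),
        |q.coeff i| * (1 + 8 ^ i * (Nat.factorial i : ℝ)) := by
      refine Finset.sum_nonneg fun i _ => ?_
      have : (0:ℝ) < 1 + 8 ^ i * (Nat.factorial i : ℝ) := by positivity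
      positivity
    linarith
  · intro v
    have heval : q.eval v = ∑ i ∈ Finset.range (q.natDegree + 1), q.coeff i * v ^ i :=
      q.eval_eq_sum_range v
    have habs : |q.eval v| ≤ ∑ i ∈ Finset.range (q.natDegree + 1), |q.coeff i| * |v| ^ i := by
      rw [heval]
      refine (Finset.abs_sum_le_sum_abs _ _).trans ?_
      refine Finset.sum_le_sum fun i _ => ?_
      rw [abs_mul, abs_pow]
    calc |q.eval v| * Real.exp (-(v ^ 2 / 8))
        ≤ (∑ i ∈ Finset.range (q.natDegree + 1), |q.coeff i| * |v| ^ i) *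
            Real.exp (-(v ^ 2 / 8)) := mul_le_mul_of_nonneg_right habs (Real.exp_nonneg _)
      _ = ∑ i ∈ Finset.range (q.natDegree + 1),
            |q.coeff i| * (|v| ^ i * Real.exp (-(v ^ 2 / 8))) := by
            rw [Finset.sum_mul]; refine Finset.sum_congr rfl fun i _ => by ring
      _ ≤ ∑ i ∈ Finset.range (q.natDegree + 1),
            |q.coeff i| * (1 + 8 ^ i * (Nat.factorial i : ℝ)) := by
            refine Finset.sum_le_sum fun i _ => ?_
            exact mul_le_mul_of_nonneg_left (pow_mul_exp_le i v) (abs_nonneg _)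
      _ ≤ _ := by linarith


noncomputable def P : ℕ → Polynomial ℝ
  | 0 => Polynomial.X
  | (n+1) => Polynomial.derivative (P n) - Polynomial.C (2⁻¹ : ℝ) * (Polynomial.X * P n)

noncomputable def K (n : ℕ) (r s : ℝ) : ℝ :=
  2⁻¹ * s ^ (-(1:ℝ) - (n:ℝ)/2) * Polynomial.eval (r / Real.sqrt s) (P n) *
    Real.exp (-(r ^ 2 / (4 * s)))

lemma sqrt_rpow_aux {s : ℝ} (hs : 0 < s) : s ^ (-(1:ℝ)/2) = (Real.sqrt s)⁻¹ := by
  rw [Real.sqrt_eq_rpow, ← Real.rpow_neg hs.le]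
  norm_num

lemma K_hasDerivAt (n : ℕ) {s : ℝ} (hs : 0 < s) (r : ℝ) :
    HasDerivAt (fun r => K n r s) (K (n+1) r s) r := by
  have hw : 0 < Real.sqrt s := Real.sqrt_pos.mpr hs
  have hw2 : Real.sqrt s ^ 2 = s := Real.sq_sqrt hs.le
  have h1 : HasDerivAt (fun r : ℝ => r / Real.sqrt s) (1 / Real.sqrt s) r := by
    simpa using (hasDerivAt_id r).div_const (Real.sqrt s)
  have h2 : HasDerivAt (fun r : ℝ => Polynomial.eval (r / Real.sqrt s) (P n))
      (Polynomial.eval (r / Real.sqrt s) (Polynomial.derivative (P n)) * (1 / Real.sqrt s)) r :=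
    (Polynomial.hasDerivAt (P n) _).comp r h1
  have h3 : HasDerivAt (fun r : ℝ => Real.exp (-(r ^ 2 / (4 * s))))
      (Real.exp (-(r ^ 2 / (4 * s))) * (-(2 * r / (4 * s)))) r := by
    have hin : HasDerivAt (fun r : ℝ => -(r ^ 2 / (4 * s))) (-(2 * r / (4 * s))) r := by
      have := ((hasDerivAt_pow 2 r).div_const (4 * s)).neg
      simpa [Pi.neg_def] using this
    exact hin.exp
  have h4 := ((h2.mul h3).const_mul (2⁻¹ * s ^ (-(1:ℝ) - (n:ℝ)/2)))
  have heq : ∀ r' : ℝ, K n r' s =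
      (2⁻¹ * s ^ (-(1:ℝ) - (n:ℝ)/2)) *
        (Polynomial.eval (r' / Real.sqrt s) (P n) * Real.exp (-(r' ^ 2 / (4 * s)))) := by
    intro r'; unfold K; ring
  rw [show (fun r => K n r s) = fun r =>
      (2⁻¹ * s ^ (-(1:ℝ) - (n:ℝ)/2)) *
        (Polynomial.eval (r / Real.sqrt s) (P n) * Real.exp (-(r ^ 2 / (4 * s)))) from
    funext heq]
  refine h4.congr_deriv (Eq.symm ?_)
  -- now an algebraic identity
  have hsplit : s ^ (-(1:ℝ) - ((n:ℝ)+1)/2) = s ^ (-(1:ℝ) - (n:ℝ)/2) * (Real.sqrt s)⁻¹ := by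
    rw [← sqrt_rpow_aux hs, ← Real.rpow_add hs]
    ring_nf
  unfold K
  rw [show ((n+1 : ℕ) : ℝ) = (n:ℝ) + 1 by push_cast; ring, hsplit]
  have hevals : Polynomial.eval (r / Real.sqrt s) (P (n+1)) =
      Polynomial.eval (r / Real.sqrt s) (Polynomial.derivative (P n)) -
        2⁻¹ * ((r / Real.sqrt s) * Polynomial.eval (r / Real.sqrt s) (P n)) := by
    simp [P]
  rw [hevals]
  set A := s ^ (-(1:ℝ) - (n:ℝ)/2) with hA
  set E := Real.exp (-(r ^ 2 / (4 * s))) with hE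
  rw [show (2 * r / (4 * s)) = 2 * r / (4 * Real.sqrt s ^ 2) by rw [hw2]]
  set w := Real.sqrt s with hwdef
  field_simp
  ring


lemma continuousOn_rpow_const (c : ℝ) :
    ContinuousOn (fun s : ℝ => s ^ c) (Ioi 0) := fun s hs =>
  (Real.continuousAt_rpow_const s c (Or.inl (ne_of_gt hs))).continuousWithinAt

lemma continuousOn_K (n : ℕ) (r : ℝ) : ContinuousOn (fun s => K n r s) (Ioi 0) := by
  unfold K
  refine ContinuousOn.mul (ContinuousOn.mul (ContinuousOn.mul continuousOn_const
      (continuousOn_rpow_const _)) ?_) ?_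
  · refine (Polynomial.continuous (P n)).comp_continuousOn ?_
    refine ContinuousOn.div continuousOn_const Real.continuous_sqrt.continuousOn ?_
    intro s hs
    exact ne_of_gt (Real.sqrt_pos.mpr hs)
  · refine Real.continuous_exp.comp_continuousOn ?_
    refine ContinuousOn.neg (ContinuousOn.div continuousOn_const ?_ ?_)
    · exact (continuous_const.mul continuous_id).continuousOn
    · intro s hs
      have hs' : (0:ℝ) < s := hs
      exact ne_of_gt (by linarith)

lemma aesm_K (n : ℕ) (r : ℝ) :
    AEStronglyMeasurable (fun s => K n r s) (volume.restrict (Ioi 0)) :=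
  (continuousOn_K n r).aestronglyMeasurable measurableSet_Ioi

lemma K_bound (n : ℕ) : ∃ C : ℝ, 0 < C ∧ ∀ r s : ℝ, 0 < s →
    |K n r s| ≤ C * (s ^ (-(1:ℝ) - (n:ℝ)/2) * Real.exp (-(r ^ 2 / 8 / s))) := by
  obtain ⟨C, hC0, hC⟩ := poly_bound (P n)
  refine ⟨C, hC0, fun r s hs => ?_⟩
  have hw : 0 < Real.sqrt s := Real.sqrt_pos.mpr hs
  have hv2 : (r / Real.sqrt s) ^ 2 = r ^ 2 / s := by
    rw [div_pow, Real.sq_sqrt hs.le]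
  have hexp : Real.exp (-(r ^ 2 / (4 * s))) =
      Real.exp (-((r / Real.sqrt s) ^ 2 / 8)) * Real.exp (-(r ^ 2 / 8 / s)) := by
    rw [← Real.exp_add, hv2]
    congr 1
    ring
  have hA : (0:ℝ) < s ^ (-(1:ℝ) - (n:ℝ)/2) := Real.rpow_pos_of_pos hs _
  have habs : |K n r s| = 2⁻¹ * s ^ (-(1:ℝ) - (n:ℝ)/2) *
      |Polynomial.eval (r / Real.sqrt s) (P n)| * Real.exp (-(r ^ 2 / (4 * s))) := by
    unfold K
    rw [abs_mul, abs_mul, abs_mul, abs_of_pos hA, abs_of_nonneg (Real.exp_nonneg _)]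
    norm_num
  rw [habs, hexp]
  have h1 := hC (r / Real.sqrt s)
  have hAE : (0:ℝ) ≤ s ^ (-(1:ℝ) - (n:ℝ)/2) * Real.exp (-(r ^ 2 / 8 / s)) :=
    mul_nonneg hA.le (Real.exp_nonneg _)
  have key := mul_le_mul_of_nonneg_right h1 hAE
  have hCAE : (0:ℝ) ≤ C * (s ^ (-(1:ℝ) - (n:ℝ)/2) * Real.exp (-(r ^ 2 / 8 / s))) :=
    mul_nonneg hC0.le hAE
  nlinarith [key, hCAE]

lemma K_zero_eq {r s : ℝ} (hs : 0 < s) :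
    K 0 r s = r / 2 * (s ^ (-(3:ℝ)/2) * Real.exp (-(r ^ 2 / (4 * s)))) := by
  unfold K
  have hw : 0 < Real.sqrt s := Real.sqrt_pos.mpr hs
  have h2 : s ^ (-(3:ℝ)/2) = s⁻¹ * (Real.sqrt s)⁻¹ := by
    rw [show (-(3:ℝ)/2) = (-1) + (-(1:ℝ)/2) by norm_num, Real.rpow_add hs, Real.rpow_neg_one,
      Real.sqrt_eq_rpow, ← Real.rpow_neg hs.le]
    norm_num
  have h1 : s ^ (-(1:ℝ) - ((0:ℕ):ℝ)/2) = s⁻¹ := by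
    norm_num [Real.rpow_neg_one]
  rw [h1, h2]
  simp only [P, Polynomial.eval_X]
  rw [div_eq_mul_inv]
  ring

lemma integrable_aux {b : ℝ} (hb : 0 < b) {e : ℝ} (he : e ≤ -(3:ℝ)/2) :
    IntegrableOn (fun s : ℝ => s ^ e * Real.exp (-(b / s))) (Ioi 0) := by
  have hcont : ContinuousOn (fun s : ℝ => s ^ e * Real.exp (-(b / s))) (Ioi 0) := by
    refine ContinuousOn.mul (continuousOn_rpow_const e) ?_
    refine Real.continuous_exp.comp_continuousOn ?_
    exact ContinuousOn.neg (ContinuousOn.div continuousOn_const continuous_id.continuousOn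
      (fun s hs => ne_of_gt hs))
  have hsplit : Ioi (0:ℝ) = Ioc 0 1 ∪ Ioi 1 := (Ioc_union_Ioi_eq_Ioi zero_le_one).symm
  rw [hsplit]
  refine IntegrableOn.union ?_ ?_
  · set m := ⌈-e⌉₊ with hm
    have hme : -e ≤ (m:ℝ) := Nat.le_ceil _
    refine Integrable.mono' (g := fun _ => (Nat.factorial m : ℝ) / b ^ m)
      (integrableOn_const measure_Ioc_lt_top.ne)
      ((hcont.mono Ioc_subset_Ioi_self).aestronglyMeasurable measurableSet_Ioc) ?_
    refine (ae_restrict_iff' measurableSet_Ioc).mpr (Filter.Eventually.of_forall ?_)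
    rintro s ⟨hs0, hs1⟩
    have hbs : 0 < b / s := div_pos hb hs0
    have hexp : Real.exp (-(b / s)) ≤ (Nat.factorial m : ℝ) * (s / b) ^ m := by
      have h1 : (b / s) ^ m / (Nat.factorial m : ℝ) ≤ Real.exp (b / s) := by
        refine le_trans ?_ (Real.sum_le_exp_of_nonneg hbs.le (m + 1))
        have := Finset.single_le_sum (f := fun k => (b / s) ^ k / (Nat.factorial k : ℝ))
          (fun k _ => by positivity) (Finset.self_mem_range_succ m)
        simpa using this
      rw [Real.exp_neg, inv_le_iff_one_le_mul₀ (Real.exp_pos _)]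
      have h2 : (b / s) ^ m ≤ (Nat.factorial m : ℝ) * Real.exp (b / s) := by
        rw [div_le_iff₀ (by positivity : (0:ℝ) < (Nat.factorial m : ℝ))] at h1
        linarith
      have h3 : (s / b) ^ m * (b / s) ^ m = 1 := by
        rw [← mul_pow, div_mul_div_comm, mul_comm s b, div_self (by positivity)]
        simp
      calc (1:ℝ) = (s / b) ^ m * (b / s) ^ m := h3.symm
        _ ≤ (s / b) ^ m * ((Nat.factorial m : ℝ) * Real.exp (b / s)) :=
            mul_le_mul_of_nonneg_left h2 (by positivity)
        _ = (Nat.factorial m : ℝ) * (s / b) ^ m * Real.exp (b / s) := by ring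
    have hrpow : s ^ e * s ^ (m:ℝ) = s ^ (e + m) := (Real.rpow_add hs0 _ _).symm
    have hsm : s ^ (e + (m:ℝ)) ≤ 1 :=
      Real.rpow_le_one hs0.le hs1 (by linarith)
    have hnorm : ‖s ^ e * Real.exp (-(b / s))‖ = s ^ e * Real.exp (-(b / s)) := by
      rw [Real.norm_eq_abs, abs_of_nonneg]
      positivity
    rw [hnorm]
    calc s ^ e * Real.exp (-(b / s)) ≤ s ^ e * ((Nat.factorial m : ℝ) * (s / b) ^ m) :=
          mul_le_mul_of_nonneg_left hexp (by positivity)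
      _ = ((Nat.factorial m : ℝ) / b ^ m) * (s ^ e * s ^ (m:ℝ)) := by
          rw [div_pow, Real.rpow_natCast]
          ring
      _ = ((Nat.factorial m : ℝ) / b ^ m) * s ^ (e + (m:ℝ)) := by rw [hrpow]
      _ ≤ (Nat.factorial m : ℝ) / b ^ m := by
          nlinarith [Real.rpow_nonneg hs0.le (e + (m:ℝ)), hsm,
            div_nonneg (Nat.cast_nonneg (Nat.factorial m))
              (le_of_lt (by positivity : (0:ℝ) < b ^ m))]
  · refine Integrable.mono' (g := fun s => s ^ e)
      (integrableOn_Ioi_rpow_of_lt (by linarith) one_pos)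
      ((hcont.mono (Ioi_subset_Ioi zero_le_one)).aestronglyMeasurable measurableSet_Ioi) ?_
    refine (ae_restrict_iff' measurableSet_Ioi).mpr (Filter.Eventually.of_forall ?_)
    intro s hs1
    have hs0 : (0:ℝ) < s := lt_trans one_pos hs1
    have : Real.exp (-(b / s)) ≤ 1 :=
      Real.exp_le_one_iff.mpr (neg_nonpos.mpr (by positivity))
    rw [Real.norm_eq_abs, abs_of_nonneg (by positivity)]
    nlinarith [Real.rpow_nonneg hs0.le e]

lemma scaling {b : ℝ} (hb : 0 < b) (e : ℝ) :
    ∫ s in Ioi (0:ℝ), s ^ e * Real.exp (-(b / s)) =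
      b ^ (e + 1) * ∫ s in Ioi (0:ℝ), s ^ e * Real.exp (-(1 / s)) := by
  have h := integral_comp_mul_left_Ioi (fun s => s ^ e * Real.exp (-(b / s))) 0 hb
  rw [mul_zero] at h
  have heq : ∀ x ∈ Ioi (0:ℝ),
      (fun s : ℝ => s ^ e * Real.exp (-(b / s))) (b * x)
        = b ^ e * (x ^ e * Real.exp (-(1 / x))) := by
    intro x hx
    simp only
    rw [Real.mul_rpow hb.le (le_of_lt hx), show b / (b * x) = 1 / x by
      rw [← div_div, div_self hb.ne']]
    ring
  rw [setIntegral_congr_fun measurableSet_Ioi heq, integral_const_mul, smul_eq_mul] at h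
  have h2 : (∫ s in Ioi (0:ℝ), s ^ e * Real.exp (-(b / s))) =
      b * (b ^ e * ∫ x in Ioi (0:ℝ), x ^ e * Real.exp (-(1 / x))) := by
    rw [h]
    field_simp
  rw [h2, Real.rpow_add_one hb.ne']
  ring


lemma rpow_neg_three_halves {s : ℝ} (hs : 0 < s) :
    s ^ (-(3:ℝ)/2) = s⁻¹ * (Real.sqrt s)⁻¹ := by
  rw [show (-(3:ℝ)/2) = (-1) + (-(1:ℝ)/2) by norm_num, Real.rpow_add hs, Real.rpow_neg_one,
    Real.sqrt_eq_rpow, ← Real.rpow_neg hs.le]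
  norm_num


lemma cov_factor {r s : ℝ} (hr : 0 < r) (hs : 0 < s) :
    |r ^ 2 / 4 * -(s ^ 2)⁻¹| * ((r ^ 2 / (4 * s)) ^ (-(1:ℝ)/2) * Real.exp (-(r ^ 2 / (4 * s))))
      = K 0 r s := by
  have hw : 0 < Real.sqrt s := Real.sqrt_pos.mpr hs
  have h1 : |r ^ 2 / 4 * -(s ^ 2)⁻¹| = r ^ 2 / 4 * (s ^ 2)⁻¹ := by
    rw [abs_mul, abs_neg, abs_of_nonneg (by positivity : (0:ℝ) ≤ r ^ 2 / 4),
      abs_of_nonneg (by positivity : (0:ℝ) ≤ (s ^ 2)⁻¹)]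
  have hsq : r ^ 2 / (4 * s) = (r / (2 * Real.sqrt s)) ^ 2 := by
    rw [div_pow, mul_pow, Real.sq_sqrt hs.le]
    norm_num
  have h2 : (r ^ 2 / (4 * s)) ^ (-(1:ℝ)/2) = 2 * Real.sqrt s / r := by
    rw [hsq, ← Real.rpow_natCast (r / (2 * Real.sqrt s)) 2, ← Real.rpow_mul (by positivity)]
    rw [show ((2:ℕ):ℝ) * (-(1:ℝ)/2) = -1 by norm_num, Real.rpow_neg_one, inv_div]
  rw [h1, h2, K_zero_eq hs, rpow_neg_three_halves hs]
  set E := Real.exp (-(r ^ 2 / (4 * s))) with hE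
  set w := Real.sqrt s with hwdef
  have hw2 : w ^ 2 = s := Real.sq_sqrt hs.le
  rw [← hw2]
  field_simp
  ring


end PHaux

set_option maxHeartbeats 1000000 in
/-- **Lemma (maximal function estimate for derivatives of the Poisson–Hermite semigroup).**
For `f ∈ L^p(γ_d)`, `1 ≤ p < ∞` and `n ≥ 1`, there is `C_n > 0` such that for all `t > 0`
and `γ_d`-a.e. `x`, `|∂ⁿ/∂tⁿ P_t f(x)| ≤ C_n T*f(x) t^{-n}`, where
`T*f(x) = sup_{s>0} |T_s f(x)|`. -/
theorem poissonHermite_deriv_maximal_bound (d : ℕ) (p : ℝ) (hp : 1 ≤ p)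
    (f : (Fin d → ℝ) → ℝ) (hf : MemLp f (ENNReal.ofReal p) (gaussMeasure d))
    (n : ℕ) (hn : 0 < n) :
    ∃ C : ℝ, 0 < C ∧ ∀ t : ℝ, 0 < t → ∀ᵐ x ∂(gaussMeasure d),
      ENNReal.ofReal |iteratedDeriv n (fun r => poissonHermite d r f x) t|
        ≤ ENNReal.ofReal C *
            (⨆ s : {s : ℝ // 0 < s}, ENNReal.ofReal |ouSemigroup d s f x|) *
            ENNReal.ofReal (t ^ (-(n : ℝ))) := by
  classical
  -- a strongly measurable representative of f
  have hfae : AEStronglyMeasurable f (gaussMeasure d) := hf.aestronglyMeasurable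
  obtain ⟨fm, hfm, hffm⟩ : ∃ g : (Fin d → ℝ) → ℝ,
      StronglyMeasurable g ∧ f =ᵐ[gaussMeasure d] g :=
    ⟨hfae.mk f, hfae.stronglyMeasurable_mk, hfae.ae_eq_mk⟩
  have hac : (volume : Measure (Fin d → ℝ)) ≪ gaussMeasure d := by
    refine withDensity_absolutelyContinuous' ?_ ?_
    · refine Measurable.aemeasurable ?_
      refine Measurable.ennreal_ofReal ?_
      refine Continuous.measurable ?_
      continuity
    · refine Filter.Eventually.of_forall fun x => ?_
      have h1 : (0:ℝ) < Real.exp (-(∑ i, (x i) ^ 2)) / Real.pi ^ ((d : ℝ) / 2) := by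
        have := Real.rpow_pos_of_pos Real.pi_pos ((d : ℝ) / 2)
        positivity
      exact (ENNReal.ofReal_pos.mpr h1).ne'
  have hvol : f =ᵐ[(volume : Measure (Fin d → ℝ))] fm := hac.ae_eq hffm
  -- equality of the semigroups for the representative
  have hOUeq : ∀ s : ℝ, s ≠ 0 → ∀ x, ouSemigroup d s f x = ouSemigroup d s fm x := by
    intro s hs x
    simp only [ouSemigroup, if_neg hs]
    congr 1
    refine integral_congr_ae ?_
    filter_upwards [hvol] with y hy
    rw [hy]
  -- constants
  obtain ⟨Cn, hCn0, hCn⟩ := PHaux.K_bound n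
  set cπ : ℝ := (Real.pi ^ ((1:ℝ)/2))⁻¹ with hcπdef
  have hcπ : 0 < cπ := by
    have := Real.rpow_pos_of_pos Real.pi_pos ((1:ℝ)/2)
    positivity
  set I : ℝ := ∫ s in Ioi (0:ℝ), s ^ (-(1:ℝ) - (n:ℝ)/2) * Real.exp (-(1 / s)) with hIdef
  have hI0 : 0 ≤ I := by
    refine setIntegral_nonneg measurableSet_Ioi fun s hs => ?_
    have : (0:ℝ) < s := hs
    positivity
  have h8 : (0:ℝ) < (8:ℝ) ^ ((n:ℝ)/2) := Real.rpow_pos_of_pos (by norm_num) _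
  set C : ℝ := cπ * Cn * ((8:ℝ) ^ ((n:ℝ)/2)) * I + 1 with hCdef
  have hC0 : 0 < C := by
    have h1 : 0 ≤ cπ * Cn * ((8:ℝ) ^ ((n:ℝ)/2)) * I := by positivity
    rw [hCdef]
    linarith
  refine ⟨C, hC0, ?_⟩
  intro t ht
  refine MeasureTheory.ae_of_all _ fun x => ?_
  set S : ℝ≥0∞ := ⨆ s : {s : ℝ // 0 < s}, ENNReal.ofReal |ouSemigroup d s f x| with hSdef
  by_cases hStop : S = ⊤
  · rw [hStop]
    have heq : ENNReal.ofReal C * ⊤ * ENNReal.ofReal (t ^ (-(n:ℝ))) = ⊤ := by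
      rw [ENNReal.mul_top ((ENNReal.ofReal_pos.mpr hC0).ne'),
        ENNReal.top_mul ((ENNReal.ofReal_pos.mpr (Real.rpow_pos_of_pos ht _)).ne')]
    rw [heq]
    exact le_top
  · set M : ℝ := S.toReal with hMdef
    have hM0 : 0 ≤ M := ENNReal.toReal_nonneg
    have hMb : ∀ s : ℝ, 0 < s → |ouSemigroup d s f x| ≤ M := by
      intro s hs
      have h1 : ENNReal.ofReal |ouSemigroup d s f x| ≤ S :=
        le_iSup (fun s : {s : ℝ // 0 < s} => ENNReal.ofReal |ouSemigroup d (s:ℝ) f x|) ⟨s, hs⟩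
      have h2 := ENNReal.toReal_mono hStop h1
      rwa [ENNReal.toReal_ofReal (abs_nonneg _)] at h2
    set φ : ℝ → ℝ := fun s => ouSemigroup d s fm x with hφdef
    have hφM : ∀ s : ℝ, 0 < s → |φ s| ≤ M := by
      intro s hs
      rw [hφdef]
      simp only
      rw [← hOUeq s hs.ne' x]
      exact hMb s hs
    -- measurability of φ on (0, ∞)
    have hφmeas : AEStronglyMeasurable φ (volume.restrict (Ioi 0)) := by
      rw [hφdef]
      simp only [ouSemigroup]
      -- the inner parametrized integral is strongly measurable in s
      have hinner : StronglyMeasurable (fun s : ℝ =>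
          ∫ y : Fin d → ℝ,
            Real.exp (-(∑ i, (y i - Real.exp (-s) * x i) ^ 2) / (1 - Real.exp (-2 * s))) * fm y) := by
        have hprod : StronglyMeasurable (fun q : ℝ × (Fin d → ℝ) =>
            Real.exp (-(∑ i, (q.2 i - Real.exp (-q.1) * x i) ^ 2) / (1 - Real.exp (-2 * q.1))) *
              fm q.2) := by
          refine Measurable.stronglyMeasurable ?_
          refine Measurable.mul ?_ (hfm.measurable.comp measurable_snd)
          refine Measurable.exp ?_
          refine Measurable.div ?_ ?_
          · refine Measurable.neg ?_
            refine Finset.measurable_sum _ fun i _ => ?_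
            have h1 : Measurable fun q : ℝ × (Fin d → ℝ) => q.2 i - Real.exp (-q.1) * x i := by
              refine Measurable.sub ?_ ?_
              · exact (measurable_pi_apply i).comp measurable_snd
              · exact (Real.measurable_exp.comp measurable_fst.neg).mul measurable_const
            exact h1.pow measurable_const
          · exact measurable_const.sub (Real.measurable_exp.comp (measurable_fst.const_mul (-2)))
        exact hprod.integral_prod_right'
      -- the coefficient is continuous on (0, ∞)
      have hcoef : ContinuousOn (fun s : ℝ =>
          (Real.pi ^ ((d : ℝ) / 2) * (1 - Real.exp (-2 * s)) ^ ((d : ℝ) / 2))⁻¹) (Ioi 0) := by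
        refine ContinuousOn.inv₀ ?_ ?_
        · refine ContinuousOn.mul continuousOn_const ?_
          intro s hs
          have hs' : (0:ℝ) < s := hs
          have hpos : 0 < 1 - Real.exp (-2 * s) := by
            have : Real.exp (-2 * s) < 1 := by
              rw [Real.exp_lt_one_iff]
              linarith
            linarith
          refine ContinuousAt.continuousWithinAt ?_
          exact ContinuousAt.comp (g := fun z : ℝ => z ^ ((d:ℝ)/2))
            (Real.continuousAt_rpow_const _ _ (Or.inl hpos.ne'))
            ((continuous_const.sub (Real.continuous_exp.comp
              (continuous_const.mul continuous_id))).continuousAt)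
        · intro s hs
          have hs' : (0:ℝ) < s := hs
          have hpos : 0 < 1 - Real.exp (-2 * s) := by
            have : Real.exp (-2 * s) < 1 := by
              rw [Real.exp_lt_one_iff]
              linarith
            linarith
          have hπ : (0:ℝ) < Real.pi ^ ((d : ℝ) / 2) := Real.rpow_pos_of_pos Real.pi_pos _
          have : (0:ℝ) < (1 - Real.exp (-2 * s)) ^ ((d : ℝ) / 2) := Real.rpow_pos_of_pos hpos _
          positivity
      have haesm : AEStronglyMeasurable (fun s : ℝ =>
          (Real.pi ^ ((d : ℝ) / 2) * (1 - Real.exp (-2 * s)) ^ ((d : ℝ) / 2))⁻¹ *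
            ∫ y : Fin d → ℝ,
              Real.exp (-(∑ i, (y i - Real.exp (-s) * x i) ^ 2) / (1 - Real.exp (-2 * s))) * fm y)
          (volume.restrict (Ioi 0)) :=
        (hcoef.aestronglyMeasurable measurableSet_Ioi).mul
          (hinner.aestronglyMeasurable.restrict)
      refine haesm.congr ?_
      refine (ae_restrict_iff' measurableSet_Ioi).mpr (Filter.Eventually.of_forall fun s hs => ?_)
      have hs' : (0:ℝ) < s := hs
      simp only [if_neg hs'.ne']
    -- the integral representations
    set F : ℕ → ℝ → ℝ := fun j r => ∫ s in Ioi (0:ℝ), PHaux.K j r s * φ s with hFdef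
    -- integrability for j = 0
    have hint0 : ∀ r : ℝ, 0 < r →
        Integrable (fun s => PHaux.K 0 r s * φ s) (volume.restrict (Ioi 0)) := by
      intro r hr
      refine Integrable.mono'
        (g := fun s => (r / 2 * M) * (s ^ (-(3:ℝ)/2) * Real.exp (-(r ^ 2 / 8 / s))))
        ((PHaux.integrable_aux (by positivity) (le_refl _)).const_mul _)
        ((PHaux.aesm_K 0 r).mul hφmeas) ?_
      refine (ae_restrict_iff' measurableSet_Ioi).mpr (Filter.Eventually.of_forall fun s hs => ?_)
      have hs' : (0:ℝ) < s := hs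
      have hexple : Real.exp (-(r ^ 2 / (4 * s))) ≤ Real.exp (-(r ^ 2 / 8 / s)) := by
        rw [Real.exp_le_exp]
        have h1 : r ^ 2 / 8 / s ≤ r ^ 2 / (4 * s) := by
          rw [div_div]
          refine div_le_div_of_nonneg_left (by positivity) (by positivity) ?_
          nlinarith
        linarith
      have hKb : |PHaux.K 0 r s| ≤ r / 2 * (s ^ (-(3:ℝ)/2) * Real.exp (-(r ^ 2 / 8 / s))) := by
        rw [PHaux.K_zero_eq hs']
        have hpow : (0:ℝ) < s ^ (-(3:ℝ)/2) := Real.rpow_pos_of_pos hs' _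
        rw [abs_mul, abs_of_nonneg (by positivity : (0:ℝ) ≤ r / 2), abs_mul,
          abs_of_pos hpow, abs_of_nonneg (Real.exp_nonneg _)]
        have := mul_le_mul_of_nonneg_left hexple hpow.le
        nlinarith
      rw [Real.norm_eq_abs, abs_mul]
      calc |PHaux.K 0 r s| * |φ s|
          ≤ (r / 2 * (s ^ (-(3:ℝ)/2) * Real.exp (-(r ^ 2 / 8 / s)))) * M := by
            refine mul_le_mul hKb (hφM s hs') (abs_nonneg _) ?_
            positivity
        _ = (r / 2 * M) * (s ^ (-(3:ℝ)/2) * Real.exp (-(r ^ 2 / 8 / s))) := by ring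
    -- induction step: differentiate under the integral sign
    have hstep : ∀ j : ℕ,
        (∀ r : ℝ, 0 < r → Integrable (fun s => PHaux.K j r s * φ s) (volume.restrict (Ioi 0))) →
        ∀ r : ℝ, 0 < r →
          Integrable (fun s => PHaux.K (j+1) r s * φ s) (volume.restrict (Ioi 0)) ∧
          HasDerivAt (F j) (F (j+1) r) r := by
      intro j ih r hr
      obtain ⟨Cj, hCj0, hCj⟩ := PHaux.K_bound (j+1)
      have hexpo : (-(1:ℝ) - ((j+1:ℕ):ℝ)/2) ≤ -(3:ℝ)/2 := by
        push_cast
        have : (0:ℝ) ≤ (j:ℝ) := Nat.cast_nonneg j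
        linarith
      have hball : ∀ r' ∈ Metric.ball r (r/2), r/2 < r' := by
        intro r' hr'
        rw [Metric.mem_ball, Real.dist_eq, abs_lt] at hr'
        linarith [hr'.1]
      have key := hasDerivAt_integral_of_dominated_loc_of_deriv_le
        (F := fun r' s => PHaux.K j r' s * φ s)
        (F' := fun r' s => PHaux.K (j+1) r' s * φ s)
        (x₀ := r)
        (bound := fun s => (Cj * M) * (s ^ (-(1:ℝ) - ((j+1:ℕ):ℝ)/2) * Real.exp (-(r ^ 2 / 32 / s))))
        (Metric.ball_mem_nhds r (half_pos hr))
        (Filter.Eventually.of_forall fun r' => (PHaux.aesm_K j r').mul hφmeas)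
        (ih r hr)
        ((PHaux.aesm_K (j+1) r).mul hφmeas)
        ?_ ?_ ?_
      · exact ⟨key.1, by simpa [hFdef] using key.2⟩
      · -- bound
        refine (ae_restrict_iff' measurableSet_Ioi).mpr (Filter.Eventually.of_forall fun s hs => ?_)
        intro r' hr'
        have hs' : (0:ℝ) < s := hs
        have hr2 : r/2 < r' := hball r' hr'
        have hexple : Real.exp (-(r' ^ 2 / 8 / s)) ≤ Real.exp (-(r ^ 2 / 32 / s)) := by
          rw [Real.exp_le_exp]
          have h1 : r ^ 2 / 32 / s ≤ r' ^ 2 / 8 / s := by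
            refine div_le_div_of_nonneg_right ?_ hs'.le
            nlinarith
          linarith
        have hKb := hCj r' s hs'
        rw [Real.norm_eq_abs, abs_mul]
        have hpow : (0:ℝ) < s ^ (-(1:ℝ) - ((j+1:ℕ):ℝ)/2) := Real.rpow_pos_of_pos hs' _
        calc |PHaux.K (j+1) r' s| * |φ s|
            ≤ (Cj * (s ^ (-(1:ℝ) - ((j+1:ℕ):ℝ)/2) * Real.exp (-(r' ^ 2 / 8 / s)))) * M := by
              refine mul_le_mul hKb (hφM s hs') (abs_nonneg _) ?_
              positivity
          _ ≤ (Cj * (s ^ (-(1:ℝ) - ((j+1:ℕ):ℝ)/2) * Real.exp (-(r ^ 2 / 32 / s)))) * M := by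
              have h2 := mul_le_mul_of_nonneg_left hexple hpow.le
              have h3 := mul_le_mul_of_nonneg_left h2 hCj0.le
              exact mul_le_mul_of_nonneg_right h3 hM0
          _ = (Cj * M) * (s ^ (-(1:ℝ) - ((j+1:ℕ):ℝ)/2) * Real.exp (-(r ^ 2 / 32 / s))) := by ring
      · exact (PHaux.integrable_aux (by positivity) hexpo).const_mul _
      · -- differentiability
        refine (ae_restrict_iff' measurableSet_Ioi).mpr (Filter.Eventually.of_forall fun s hs => ?_)
        intro r' hr'
        have hs' : (0:ℝ) < s := hs
        exact (PHaux.K_hasDerivAt j hs' r').mul_const (φ s)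
    have hFint : ∀ j : ℕ, ∀ r : ℝ, 0 < r →
        Integrable (fun s => PHaux.K j r s * φ s) (volume.restrict (Ioi 0)) := by
      intro j
      induction j with
      | zero => exact hint0
      | succ j ih => exact fun r hr => (hstep j ih r hr).1
    have hder : ∀ j : ℕ, ∀ r : ℝ, 0 < r → HasDerivAt (F j) (F (j+1) r) r :=
      fun j r hr => (hstep j (hFint j) r hr).2
    -- change of variables: P_r f x = cπ * F 0 r for r > 0
    have hbase : ∀ r : ℝ, 0 < r → poissonHermite d r f x = cπ * F 0 r := by
      intro r hr
      have hcov0 : ∫ u in Ioi (0:ℝ),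
          u ^ (-(1:ℝ)/2) * Real.exp (-u) * ouSemigroup d (r ^ 2 / (4 * u)) f x
          = ∫ s in Ioi (0:ℝ), PHaux.K 0 r s * φ s := by
        have hr2 : (0:ℝ) < r ^ 2 := by positivity
        -- replace f by fm
        have step1 : ∫ u in Ioi (0:ℝ), u ^ (-(1:ℝ)/2) * Real.exp (-u) * ouSemigroup d (r ^ 2 / (4 * u)) f x
            = ∫ u in Ioi (0:ℝ), u ^ (-(1:ℝ)/2) * Real.exp (-u) * φ (r ^ 2 / (4 * u)) := by
          refine setIntegral_congr_fun measurableSet_Ioi fun u hu => ?_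
          have hu' : (0:ℝ) < u := hu
          have harg : r ^ 2 / (4 * u) ≠ 0 := by positivity
          rw [hφdef]
          simp only
          rw [hOUeq _ harg x]
        rw [step1]
        -- change of variables u = σ s := r^2/4 * s⁻¹
        set σ : ℝ → ℝ := fun s => r ^ 2 / 4 * s⁻¹ with hσdef
        have hσderiv : ∀ s ∈ Ioi (0:ℝ), HasDerivWithinAt σ (r ^ 2 / 4 * -(s ^ 2)⁻¹) (Ioi 0) s := by
          intro s hs
          have hs' : (0:ℝ) < s := hs
          exact ((hasDerivAt_inv hs'.ne').const_mul (r ^ 2 / 4)).hasDerivWithinAt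
        have hσinj : InjOn σ (Ioi 0) := by
          intro a ha b hb hab
          have ha' : (0:ℝ) < a := ha
          have hb' : (0:ℝ) < b := hb
          rw [hσdef] at hab
          simp only at hab
          have h4 : r ^ 2 / 4 ≠ 0 := by positivity
          have := mul_left_cancel₀ h4 hab
          exact inv_injective this
        have hσimg : σ '' (Ioi 0) = Ioi (0:ℝ) := by
          ext y
          constructor
          · rintro ⟨u, hu, rfl⟩
            have hu' : (0:ℝ) < u := hu
            have : (0:ℝ) < r ^ 2 / 4 * u⁻¹ := by positivity
            exact this
          · intro hy
            have hy' : (0:ℝ) < y := hy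
            refine ⟨r ^ 2 / (4 * y), mem_Ioi.mpr (by positivity), ?_⟩
            rw [hσdef]
            simp only
            field_simp
        have hcov := integral_image_eq_integral_abs_deriv_smul measurableSet_Ioi hσderiv hσinj
          (fun u => u ^ (-(1:ℝ)/2) * Real.exp (-u) * φ (r ^ 2 / (4 * u)))
        rw [hσimg] at hcov
        rw [hcov]
        refine setIntegral_congr_fun measurableSet_Ioi fun s hs => ?_
        have hs' : (0:ℝ) < s := hs
        have hσs : σ s = r ^ 2 / (4 * s) := by
          rw [hσdef]
          simp only
          field_simp
        have hσpos : (0:ℝ) < σ s := by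
          rw [hσs]
          positivity
        have hback : r ^ 2 / (4 * σ s) = s := by
          rw [hσs]
          field_simp
        rw [smul_eq_mul, hback, hσs, ← PHaux.cov_factor hr hs']
        ring
      show (Real.pi ^ ((1 : ℝ) / 2))⁻¹ * _ = cπ * F 0 r
      rw [hcπdef, hFdef]
      simp only
      rw [hcov0]
    -- iterated derivatives
    have hiter : ∀ j : ℕ, ∀ r : ℝ, 0 < r →
        iteratedDeriv j (fun r' => poissonHermite d r' f x) r = cπ * F j r := by
      intro j
      induction j with
      | zero =>
        intro r hr
        simpa using hbase r hr
      | succ j ih =>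
        intro r hr
        rw [iteratedDeriv_succ]
        have hev : iteratedDeriv j (fun r' => poissonHermite d r' f x)
            =ᶠ[nhds r] fun r' => cπ * F j r' := by
          filter_upwards [isOpen_Ioi.mem_nhds (show r ∈ Ioi (0:ℝ) from hr)] with r' hr'
          exact ih r' hr'
        rw [hev.deriv_eq]
        exact (((hder j r hr).const_mul cπ)).deriv
    -- final estimate
    have hfinal : |iteratedDeriv n (fun r => poissonHermite d r f x) t| ≤ C * (M * t ^ (-(n:ℝ))) := by
      rw [hiter n t ht, abs_mul, abs_of_pos hcπ, hFdef]
      simp only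
      have hint : Integrable (fun s => PHaux.K n t s * φ s) (volume.restrict (Ioi 0)) :=
        hFint n t ht
      have hexpo : (-(1:ℝ) - (n:ℝ)/2) ≤ -(3:ℝ)/2 := by
        have h1 : (1:ℝ) ≤ (n:ℝ) := by exact_mod_cast hn
        linarith
      have hb : (0:ℝ) < t ^ 2 / 8 := by positivity
      have h8 : (0:ℝ) < (8:ℝ) ^ ((n:ℝ)/2) := Real.rpow_pos_of_pos (by norm_num) _
      have htn : (0:ℝ) < t ^ (-(n:ℝ)) := Real.rpow_pos_of_pos ht _
      have hRint : IntegrableOn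
          (fun s : ℝ => (Cn * M) * (s ^ (-(1:ℝ) - (n:ℝ)/2) * Real.exp (-(t ^ 2 / 8 / s))))
          (Ioi 0) := (PHaux.integrable_aux hb hexpo).const_mul _
      have h1 : |∫ s in Ioi (0:ℝ), PHaux.K n t s * φ s|
          ≤ ∫ s in Ioi (0:ℝ), |PHaux.K n t s * φ s| := by
        simp only [abs_mul]
        simpa [Real.norm_eq_abs, abs_mul] using
          norm_integral_le_integral_norm (μ := volume.restrict (Ioi 0))
            (fun s => PHaux.K n t s * φ s)
      have h2 : ∫ s in Ioi (0:ℝ), |PHaux.K n t s * φ s|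
          ≤ ∫ s in Ioi (0:ℝ), (Cn * M) * (s ^ (-(1:ℝ) - (n:ℝ)/2) * Real.exp (-(t ^ 2 / 8 / s))) := by
        refine setIntegral_mono_on hint.abs hRint measurableSet_Ioi fun s hs => ?_
        have hs' : (0:ℝ) < s := hs
        rw [abs_mul]
        calc |PHaux.K n t s| * |φ s|
            ≤ (Cn * (s ^ (-(1:ℝ) - (n:ℝ)/2) * Real.exp (-(t ^ 2 / 8 / s)))) * M := by
              refine mul_le_mul (hCn t s hs') (hφM s hs') (abs_nonneg _) ?_
              have := Real.rpow_pos_of_pos hs' (-(1:ℝ) - (n:ℝ)/2)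
              positivity
          _ = (Cn * M) * (s ^ (-(1:ℝ) - (n:ℝ)/2) * Real.exp (-(t ^ 2 / 8 / s))) := by ring
      have h3 : ∫ s in Ioi (0:ℝ), (Cn * M) * (s ^ (-(1:ℝ) - (n:ℝ)/2) * Real.exp (-(t ^ 2 / 8 / s)))
          = (Cn * M) * ((t ^ 2 / 8) ^ ((-(1:ℝ) - (n:ℝ)/2) + 1) * I) := by
        rw [integral_const_mul, PHaux.scaling hb, hIdef]
      have h4 : (t ^ 2 / 8) ^ ((-(1:ℝ) - (n:ℝ)/2) + 1) = t ^ (-(n:ℝ)) * (8:ℝ) ^ ((n:ℝ)/2) := by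
        rw [show (-(1:ℝ) - (n:ℝ)/2) + 1 = -((n:ℝ)/2) by ring]
        rw [Real.div_rpow (by positivity) (by norm_num)]
        rw [← Real.rpow_natCast t 2, ← Real.rpow_mul ht.le]
        rw [show ((2:ℕ):ℝ) * (-((n:ℝ)/2)) = -(n:ℝ) by push_cast; ring]
        rw [Real.rpow_neg (by norm_num : (0:ℝ) ≤ 8), div_inv_eq_mul]
      have hII : ∫ s in Ioi (0:ℝ), |PHaux.K n t s * φ s|
          ≤ (Cn * M) * (t ^ (-(n:ℝ)) * (8:ℝ) ^ ((n:ℝ)/2) * I) := by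
        rw [← h4] at *
        calc ∫ s in Ioi (0:ℝ), |PHaux.K n t s * φ s| ≤ _ := h2
          _ = _ := h3
      have habs : (0:ℝ) ≤ |∫ s in Ioi (0:ℝ), PHaux.K n t s * φ s| := abs_nonneg _
      have hchain : cπ * |∫ s in Ioi (0:ℝ), PHaux.K n t s * φ s|
          ≤ cπ * ((Cn * M) * (t ^ (-(n:ℝ)) * (8:ℝ) ^ ((n:ℝ)/2) * I)) := by
        refine mul_le_mul_of_nonneg_left (le_trans h1 hII) hcπ.le
      calc cπ * |∫ s in Ioi (0:ℝ), PHaux.K n t s * φ s|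
          ≤ cπ * ((Cn * M) * (t ^ (-(n:ℝ)) * (8:ℝ) ^ ((n:ℝ)/2) * I)) := hchain
        _ = (cπ * Cn * ((8:ℝ) ^ ((n:ℝ)/2)) * I) * (M * t ^ (-(n:ℝ))) := by ring
        _ ≤ C * (M * t ^ (-(n:ℝ))) := by
            rw [hCdef]
            have hMt : 0 ≤ M * t ^ (-(n:ℝ)) := mul_nonneg hM0 htn.le
            nlinarith
    calc ENNReal.ofReal |iteratedDeriv n (fun r => poissonHermite d r f x) t|
        ≤ ENNReal.ofReal (C * (M * t ^ (-(n:ℝ)))) := ENNReal.ofReal_le_ofReal hfinal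
      _ = ENNReal.ofReal C * S * ENNReal.ofReal (t ^ (-(n:ℝ))) := by
          rw [ENNReal.ofReal_mul hC0.le, ENNReal.ofReal_mul hM0,
            ENNReal.ofReal_toReal hStop, mul_assoc]
      _ ≤ _ := le_refl _
end
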